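/- arXiv:1607.04528 — 4 statements merged into one kernel-verified Lean document; each statement's English description precedes it below -/
import Mathlib

section
/- Let U be an N×N unitary Hermitian matrix with constant diagonal U_ii = cos θ where d = N·sin²(θ/2) for θ ∈ [0, π/2]. Then G = (N/(2d))·(I − U) satisfies: G_ii = 1 for all i, |G_ij|² = (N−d)/(d(N−1)) for all i ≠ j, and the eigenvalues of G lie in {0, N/d}. -/
open scoped BigOperators
open Real

lemma stmt_2_aux {A : Type*} [Ring A] [Algebra ℂ A] (g : A) (t μ : ℂ)
    (h : g * g = t • g) :
    (μ • (1:A) - g) * (g + (μ - t) • (1:A)) = (μ * (μ - t)) • (1:A) ∧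
    (g + (μ - t) • (1:A)) * (μ • (1:A) - g) = (μ * (μ - t)) • (1:A) := by
  constructor <;>
  · simp only [add_mul, mul_add, sub_mul, mul_sub, smul_mul_assoc, mul_smul_comm,
      one_mul, mul_one, h]
    module

theorem stmt_2 {N d : ℕ} (θ : ℝ) (hθ : θ ∈ Set.Ioo 0 (Real.pi / 2))
    (hdθ : (d : ℝ) = N * Real.sin (θ / 2) ^ 2) (hd0 : 0 < d) (hdN : d < N)
    (U : Matrix (Fin N) (Fin N) ℂ) (hU : U ∈ Matrix.unitaryGroup (Fin N) ℂ)
    (hherm : U.IsHermitian)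
    (hdiag : ∀ i, U i i = (Real.cos θ : ℂ))
    (hoff : ∀ i j, i ≠ j → ‖U i j‖ ^ 2 = Real.sin θ ^ 2 / (N - 1)) :
    (∀ i, (((N : ℂ) / (2 * d)) • ((1 : Matrix (Fin N) (Fin N) ℂ) - U)) i i = 1) ∧
    (∀ i j, i ≠ j →
      ‖(((N : ℂ) / (2 * d)) • ((1 : Matrix (Fin N) (Fin N) ℂ) - U)) i j‖ ^ 2
        = ((N : ℝ) - d) / (d * (N - 1))) ∧
    (∀ μ ∈ spectrum ℂ (((N : ℂ) / (2 * d)) • ((1 : Matrix (Fin N) (Fin N) ℂ) - U)),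
      μ = 0 ∨ μ = (N : ℂ) / d) := by
  have hN0 : (0:ℝ) < N := by
    have : 0 < N := hd0.trans hdN
    exact_mod_cast this
  have hNne : (N:ℝ) ≠ 0 := ne_of_gt hN0
  have hdne : (d:ℝ) ≠ 0 := ne_of_gt (by exact_mod_cast hd0)
  have hN1 : (1:ℝ) ≤ (N:ℝ) - 1 := by
    have : (2:ℕ) ≤ N := by omega
    have : (2:ℝ) ≤ N := by exact_mod_cast this
    linarith
  have hN1ne : (N:ℝ) - 1 ≠ 0 := by linarith
  have hcos : Real.cos θ = 1 - 2 * (d:ℝ) / N := by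
    have h2 := Real.cos_two_mul (θ/2)
    rw [show 2*(θ/2) = θ by ring] at h2
    have h3 : Real.cos (θ/2) ^ 2 = 1 - Real.sin (θ/2) ^ 2 := by
      have := Real.sin_sq (θ/2); linarith
    rw [h2, h3, hdθ]; field_simp; ring
  have hsin2 : Real.sin θ ^ 2 = 4 * (d:ℝ) * ((N:ℝ) - d) / (N^2) := by
    rw [Real.sin_sq, hcos]; field_simp; ring
  have hdneC : (d:ℂ) ≠ 0 := by exact_mod_cast hdne
  have hNneC : (N:ℂ) ≠ 0 := by exact_mod_cast hNne
  refine ⟨?_, ?_, ?_⟩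
  · intro i
    have he : (((N : ℂ) / (2 * d)) • ((1 : Matrix (Fin N) (Fin N) ℂ) - U)) i i
        = ((N : ℂ) / (2 * d)) * (1 - U i i) := by
      simp [Matrix.smul_apply, Matrix.sub_apply, Matrix.one_apply_eq]
    rw [he, hdiag i, hcos]
    push_cast
    field_simp
    ring
  · intro i j hij
    have he : (((N : ℂ) / (2 * d)) • ((1 : Matrix (Fin N) (Fin N) ℂ) - U)) i j
        = ((N : ℂ) / (2 * d)) * (0 - U i j) := by
      simp [Matrix.smul_apply, Matrix.sub_apply, Matrix.one_apply_ne hij]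
    rw [he, norm_mul, mul_pow]
    have habsc : ‖((N : ℂ) / (2 * d))‖ = (N:ℝ) / (2*d) := by
      rw [norm_div, norm_mul]
      simp
    rw [zero_sub, norm_neg, habsc, hoff i j hij, hsin2]
    field_simp
    ring
  · intro μ hμ
    by_contra hcon
    push_neg at hcon
    obtain ⟨h0, hNd⟩ := hcon
    set G : Matrix (Fin N) (Fin N) ℂ :=
      ((N : ℂ) / (2 * d)) • ((1 : Matrix (Fin N) (Fin N) ℂ) - U) with hG
    have hU2 : U * U = 1 := by
      have h1 := hU.1
      rwa [show star U = U from hherm] at h1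
    have hsub : ((1 : Matrix (Fin N) (Fin N) ℂ) - U) * (1 - U)
        = (2:ℂ) • ((1 : Matrix (Fin N) (Fin N) ℂ) - U) := by
      have h : ((1 : Matrix (Fin N) (Fin N) ℂ) - U) * (1 - U) = 1 - U - U + U * U := by
        noncomm_ring
      rw [h, hU2]
      module
    have hG2 : G * G = ((N:ℂ)/d) • G := by
      rw [hG, smul_mul_smul_comm, hsub, smul_smul, smul_smul]
      congr 1
      field_simp
    set t : ℂ := (N:ℂ)/d with ht
    have hkne : μ * (μ - t) ≠ 0 := mul_ne_zero h0 (sub_ne_zero.mpr hNd)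
    obtain ⟨key1, key2⟩ := stmt_2_aux G t μ hG2
    set k : ℂ := μ * (μ - t) with hk
    set W : Matrix (Fin N) (Fin N) ℂ := G + (μ - t) • (1 : Matrix (Fin N) (Fin N) ℂ) with hW
    have halg : algebraMap ℂ (Matrix (Fin N) (Fin N) ℂ) μ
        = μ • (1 : Matrix (Fin N) (Fin N) ℂ) := by
      rw [Algebra.algebraMap_eq_smul_one]
    have hinv1 : (algebraMap ℂ (Matrix (Fin N) (Fin N) ℂ) μ - G) * (k⁻¹ • W) = 1 := by
      rw [halg, mul_smul_comm, key1, smul_smul, inv_mul_cancel₀ hkne, one_smul]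
    have hinv2 : (k⁻¹ • W) * (algebraMap ℂ (Matrix (Fin N) (Fin N) ℂ) μ - G) = 1 := by
      rw [halg, smul_mul_assoc, key2, smul_smul, inv_mul_cancel₀ hkne, one_smul]
    exact (spectrum.mem_iff.mp hμ)
      ⟨⟨algebraMap ℂ (Matrix (Fin N) (Fin N) ℂ) μ - G, k⁻¹ • W, hinv1, hinv2⟩, rfl⟩
end

section
/- If G is the Gram matrix of an ETF(d,N) (G Hermitian, G_jj = 1, eigenvalues in {0, N/d}, |G_jl| = √((N−d)/(d(N−1))) for j ≠ l), then U = I − (2d/N)·G is unitary, Hermitian, with constant diagonal U_ii = 1 − 2d/N, and |U_ij|² = sin²(θ)/(N−1) for i ≠ j where cos θ = 1 − 2d/N. -/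
open scoped BigOperators

theorem stmt_3 {N d : ℕ} (hd0 : 0 < d) (hdN : d < N)
    (G : Matrix (Fin N) (Fin N) ℂ) (hG : G.IsHermitian)
    (hdiag : ∀ j, G j j = 1)
    (hoff : ∀ j l, j ≠ l →
      ‖G j l‖ = Real.sqrt (((N : ℝ) - d) / (d * (N - 1))))
    (hspec : ∀ μ ∈ spectrum ℂ G, μ = 0 ∨ μ = (N : ℂ) / d) :
    ((1 : Matrix (Fin N) (Fin N) ℂ) - ((2 * d : ℂ) / N) • G) ∈ Matrix.unitaryGroup (Fin N) ℂ ∧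
    ((1 : Matrix (Fin N) (Fin N) ℂ) - ((2 * d : ℂ) / N) • G).IsHermitian ∧
    (∀ i, ((1 : Matrix (Fin N) (Fin N) ℂ) - ((2 * d : ℂ) / N) • G) i i
      = ((1 - 2 * (d : ℝ) / N : ℝ) : ℂ)) ∧
    (∀ θ : ℝ, Real.cos θ = 1 - 2 * (d : ℝ) / N →
      ∀ i j, i ≠ j →
        ‖((1 : Matrix (Fin N) (Fin N) ℂ) - ((2 * d : ℂ) / N) • G) i j‖ ^ 2
          = Real.sin θ ^ 2 / (N - 1)) := by
  have hN0 : (0 : ℕ) < N := lt_trans hd0 hdN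
  have hNne : (N : ℂ) ≠ 0 := Nat.cast_ne_zero.mpr hN0.ne'
  have hdne : (d : ℂ) ≠ 0 := Nat.cast_ne_zero.mpr hd0.ne'
  have hNr : (N : ℝ) ≠ 0 := Nat.cast_ne_zero.mpr hN0.ne'
  have hdr : (d : ℝ) ≠ 0 := Nat.cast_ne_zero.mpr hd0.ne'
  have hN2 : 2 ≤ N := by omega
  have hN1r : (1 : ℝ) < (N : ℝ) := by exact_mod_cast (by omega : 1 < N)
  -- G * G = (N/d) • G
  have hG2 : G * G = ((N : ℂ) / d) • G := by
    set V : Matrix (Fin N) (Fin N) ℂ := (hG.eigenvectorUnitary : Matrix (Fin N) (Fin N) ℂ)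
    set D : Matrix (Fin N) (Fin N) ℂ := Matrix.diagonal (RCLike.ofReal ∘ hG.eigenvalues) with hD
    have hVV : (star V) * V = 1 := (Matrix.mem_unitaryGroup_iff').mp hG.eigenvectorUnitary.2
    have hspecD : ∀ i, ((hG.eigenvalues i : ℝ) : ℂ) = 0 ∨
        ((hG.eigenvalues i : ℝ) : ℂ) = (N : ℂ) / d := by
      intro i
      exact hspec _ (spectrum.algebraMap_mem ℂ (hG.eigenvalues_mem_spectrum_real i))
    have hDD : D * D = ((N : ℂ) / d) • D := by
      rw [hD, Matrix.diagonal_mul_diagonal]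
      ext i j
      rcases eq_or_ne i j with rfl | hij
      · rcases hspecD i with h | h <;>
          simp [Matrix.diagonal_apply_eq, Function.comp, h, mul_comm]
      · simp [Matrix.diagonal_apply_ne _ hij]
    have hST : G = V * D * star V := hG.spectral_theorem
    calc G * G = (V * D * star V) * (V * D * star V) := by rw [← hST]
      _ = V * (D * (star V * (V * (D * star V)))) := by simp only [mul_assoc]
      _ = V * (D * (D * star V)) := by rw [← mul_assoc (star V), hVV, one_mul]
      _ = V * (D * D) * star V := by simp only [mul_assoc]
      _ = ((N : ℂ) / d) • (V * D * star V) := by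
          rw [hDD]
          simp only [Matrix.mul_smul, Matrix.smul_mul, mul_assoc]
      _ = ((N : ℂ) / d) • G := by rw [← hST]
  set c : ℂ := (2 * d : ℂ) / N with hc
  set U : Matrix (Fin N) (Fin N) ℂ := (1 : Matrix (Fin N) (Fin N) ℂ) - c • G with hU
  have hcre : c = ((2 * d / N : ℝ) : ℂ) := by rw [hc]; push_cast; ring
  have hUherm : U.IsHermitian := by
    unfold Matrix.IsHermitian
    rw [hU, Matrix.conjTranspose_sub, Matrix.conjTranspose_smul, Matrix.conjTranspose_one, hG]
    congr 1
    rw [hcre, RCLike.star_def, Complex.conj_ofReal]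
  have hcc : c * c * ((N : ℂ) / d) = 2 * c := by
    rw [hc]; field_simp
  have hUU : U * U = 1 := by
    rw [hU]
    simp only [mul_sub, sub_mul, one_mul, mul_one, Matrix.smul_mul, Matrix.mul_smul, smul_smul]
    rw [hG2, smul_smul, hcc]
    module
  refine ⟨?_, hUherm, ?_, ?_⟩
  · rw [Matrix.mem_unitaryGroup_iff]
    rw [show star U = U from hUherm]
    exact hUU
  · intro i
    simp only [hU, Matrix.sub_apply, Matrix.smul_apply, Matrix.one_apply_eq, hdiag, smul_eq_mul,
      mul_one, hc]
    push_cast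
    ring
  · intro θ hθ i j hij
    have hUij : U i j = -(c * G i j) := by
      simp [hU, Matrix.one_apply_ne hij]
    rw [hUij, norm_neg, norm_mul]
    have hcabs : ‖c‖ = 2 * d / N := by
      rw [hc]
      rw [show (2 * (d:ℂ)) / N = (((2 * d / N : ℝ)) : ℂ) by push_cast; ring]
      rw [Complex.norm_real, Real.norm_of_nonneg (by positivity)]
    rw [hcabs, hoff i j hij, mul_pow, Real.sq_sqrt (by
      apply div_nonneg
      · have : (d : ℝ) ≤ N := by exact_mod_cast hdN.le
        linarith
      · have h1 : (0:ℝ) ≤ (d:ℝ) := by positivity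
        nlinarith [hN1r])]
    have hsin : Real.sin θ ^ 2 = 1 - (1 - 2 * (d : ℝ) / N) ^ 2 := by
      rw [Real.sin_sq, hθ]
    rw [hsin]
    have hN1ne : (N : ℝ) - 1 ≠ 0 := by linarith
    field_simp
    ring
end

section
/- If a unistochastic matrix B_N(θ) of the special form (diagonal entries cos²θ, off-diagonal entries sin²(θ)/(N−1), underlying unitary Hermitian with constant nonnegative diagonal cos θ) exists, then N·sin²(θ/2) is related to the rank d of the associated Gram matrix by d = N·sin²(θ/2); in particular N cos θ = N − 2d. -/
open scoped BigOperators
open Matrix in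

theorem stmt_7 {N : ℕ} (θ : ℝ) (hcos : 0 ≤ Real.cos θ) (hθ : θ ∈ Set.Icc 0 (Real.pi / 2))
    (B : Matrix (Fin N) (Fin N) ℝ)
    (hBdiag : ∀ i, B i i = Real.cos θ ^ 2)
    (hBoff : ∀ i j, i ≠ j → B i j = Real.sin θ ^ 2 / (N - 1))
    (U : Matrix (Fin N) (Fin N) ℂ) (hU : U ∈ Matrix.unitaryGroup (Fin N) ℂ)
    (hherm : U.IsHermitian)
    (hdiag : ∀ i, U i i = (Real.cos θ : ℂ))
    (hUB : ∀ i j, ‖U i j‖ ^ 2 = B i j)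
    (d : ℕ) (hd : d = ((1 : Matrix (Fin N) (Fin N) ℂ) - U).rank) :
    (d : ℝ) = N * Real.sin (θ / 2) ^ 2 ∧ (N : ℝ) * Real.cos θ = N - 2 * d := by
  classical
  set M : Matrix (Fin N) (Fin N) ℂ := (1 : Matrix (Fin N) (Fin N) ℂ) - U with hM
  have hMherm : M.IsHermitian := Matrix.isHermitian_one.sub hherm
  -- U * U = 1
  have hUU : U * U = 1 := by
    have h1 : star U * U = 1 := (Matrix.mem_unitaryGroup_iff'.mp hU)
    rwa [show star U = U from hherm] at h1
  -- M * M = M + M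
  have hMM : M * M = M + M := by
    rw [hM]
    simp only [Matrix.sub_mul, Matrix.mul_sub, Matrix.one_mul, Matrix.mul_one, hUU]
    abel
  -- eigenvalues of M are 0 or 2
  have heig : ∀ i, hMherm.eigenvalues i = 0 ∨ hMherm.eigenvalues i = 2 := by
    intro i
    set μ : ℝ := hMherm.eigenvalues i with hμ
    set v : Fin N → ℂ := ⇑(hMherm.eigenvectorBasis i) with hv
    have hvne : v ≠ 0 := by
      simpa [hv] using hMherm.eigenvectorBasis.orthonormal.ne_zero i
    have hMv : M *ᵥ v = μ • v := hMherm.mulVec_eigenvectorBasis i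
    have h2 : (M * M) *ᵥ v = (μ * μ) • v := by
      rw [← Matrix.mulVec_mulVec, hMv, Matrix.mulVec_smul, hMv, smul_smul]
    have h3 : (M * M) *ᵥ v = (2 * μ) • v := by
      rw [hMM, Matrix.add_mulVec, hMv, ← two_smul ℝ (μ • v), smul_smul]
    have h4 : (μ * μ) • v = (2 * μ) • v := h2.symm.trans h3
    have h5 : μ * μ = 2 * μ := by
      obtain ⟨j, hj⟩ := Function.ne_iff.mp hvne
      have h6 := congrFun h4 j
      simp only [Pi.smul_apply, Complex.real_smul] at h6
      have h7 : ((μ * μ : ℝ) : ℂ) = ((2 * μ : ℝ) : ℂ) :=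
        mul_right_cancel₀ (by simpa using hj) h6
      exact_mod_cast h7
    rcases mul_eq_zero.mp (show (μ - 2) * μ = 0 by nlinarith) with h | h
    · right; linarith
    · left; exact h
  -- trace of M equals sum of eigenvalues
  have htrace : M.trace = (↑(∑ i, hMherm.eigenvalues i) : ℂ) := by
    conv_lhs => rw [hMherm.spectral_theorem]
    rw [Unitary.conjStarAlgAut_apply]
    rw [Matrix.trace_mul_cycle]
    rw [show (star (Matrix.IsHermitian.eigenvectorUnitary hMherm : Matrix (Fin N) (Fin N) ℂ)) *
        (Matrix.IsHermitian.eigenvectorUnitary hMherm : Matrix (Fin N) (Fin N) ℂ) = 1 from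
      Matrix.mem_unitaryGroup_iff'.mp (Matrix.IsHermitian.eigenvectorUnitary hMherm).2]
    rw [Matrix.one_mul, Matrix.trace_diagonal]
    push_cast
    rfl
  -- trace of M equals N * (1 - cos θ)
  have htrace2 : M.trace = (N : ℂ) * (1 - (Real.cos θ : ℂ)) := by
    rw [Matrix.trace]
    have : ∀ i, M.diag i = 1 - (Real.cos θ : ℂ) := by
      intro i
      simp [hM, Matrix.diag, Matrix.sub_apply, Matrix.one_apply, hdiag i]
    rw [Finset.sum_congr rfl fun i _ => this i]
    simp [mul_comm]
    ring
  -- sum of eigenvalues = 2 * d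
  have hsum : ∑ i, hMherm.eigenvalues i = 2 * (d : ℝ) := by
    have hrank : d = Fintype.card {i // hMherm.eigenvalues i ≠ 0} := by
      rw [hd, hMherm.rank_eq_card_non_zero_eigs]
    rw [Finset.sum_congr rfl (fun i _ => rfl)]
    have : ∑ i, hMherm.eigenvalues i =
        ∑ i ∈ Finset.univ.filter (fun i => hMherm.eigenvalues i ≠ 0), hMherm.eigenvalues i := by
      rw [Finset.sum_filter_ne_zero]
    rw [this]
    have h2 : ∀ i ∈ Finset.univ.filter (fun i => hMherm.eigenvalues i ≠ 0),
        hMherm.eigenvalues i = 2 := by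
      intro i hi
      rcases heig i with h | h
      · exact absurd h (Finset.mem_filter.mp hi).2
      · exact h
    rw [Finset.sum_congr rfl h2, Finset.sum_const, nsmul_eq_mul]
    rw [hrank, Fintype.card_subtype]
    ring
  -- combine
  have hkey : (N : ℝ) * (1 - Real.cos θ) = 2 * (d : ℝ) := by
    have h := htrace.symm.trans htrace2
    rw [hsum] at h
    exact_mod_cast h.symm
  have hhalf : Real.cos θ = 1 - 2 * Real.sin (θ / 2) ^ 2 := by
    have h1 : Real.cos (2 * (θ / 2)) = 2 * Real.cos (θ / 2) ^ 2 - 1 := Real.cos_two_mul _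
    have h2 := Real.sin_sq_add_cos_sq (θ / 2)
    rw [show 2 * (θ / 2) = θ by ring] at h1
    linarith
  constructor
  · nlinarith [hkey, hhalf]
  · linarith [hkey]
end

section
/- If H is an N×N complex Hadamard matrix (all entries of modulus 1, rows pairwise orthogonal) and columns C_A, C_B form an ER pair, then the matrix H(α) obtained by replacing columns C_A, C_B with C_A(α), C_B(α) (ER-pair phase construction) is a complex Hadamard matrix for every α ∈ ℝ. -/
open scoped BigOperators
open Complex

theorem stmt_14 {N : ℕ} (H : Matrix (Fin N) (Fin N) ℂ)
    (hmod : ∀ i j, ‖H i j‖ = 1)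
    (horth : ∀ a b : Fin N, a ≠ b → ∑ i, (starRingEnd ℂ) (H i a) * H i b = 0)
    (A B : Fin N) (hAB : A ≠ B)
    (hER : ∀ i, H i A * (starRingEnd ℂ) (H i B) = 1 ∨ H i A * (starRingEnd ℂ) (H i B) = -1)
    (α : ℝ) :
    (∀ i j, ‖
        ((fun i j => if (j = A ∨ j = B) ∧ H i A * (starRingEnd ℂ) (H i B) = -1
            then Complex.exp ((α : ℂ) * I) * H i j else H i j) i j)‖ = 1) ∧
    (∀ a b : Fin N, a ≠ b →
      ∑ i, (starRingEnd ℂ)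
          ((fun i j => if (j = A ∨ j = B) ∧ H i A * (starRingEnd ℂ) (H i B) = -1
              then Complex.exp ((α : ℂ) * I) * H i j else H i j) i a)
        * ((fun i j => if (j = A ∨ j = B) ∧ H i A * (starRingEnd ℂ) (H i B) = -1
              then Complex.exp ((α : ℂ) * I) * H i j else H i j) i b) = 0) := by
  set e : ℂ := Complex.exp ((α : ℂ) * I) with he
  have hee : (starRingEnd ℂ) e * e = 1 := by
    rw [he, ← Complex.exp_conj, ← Complex.exp_add]
    have : (starRingEnd ℂ) ((α : ℂ) * I) + (α : ℂ) * I = 0 := by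
      simp [map_mul, Complex.conj_I]
    rw [this, Complex.exp_zero]
  have hone : ∀ i j, (starRingEnd ℂ) (H i j) * H i j = 1 := by
    intro i j
    rw [mul_comm, Complex.mul_conj, Complex.normSq_eq_norm_sq, hmod]
    norm_num
  -- key: H i A = H i B or H i A = - H i B
  have hkey : ∀ i, (H i A = H i B ∧ ¬ (H i A * (starRingEnd ℂ) (H i B) = -1))
      ∨ (H i A = - H i B ∧ H i A * (starRingEnd ℂ) (H i B) = -1) := by
    intro i
    rcases hER i with h | h
    · left
      constructor
      · have h2 := congrArg (· * H i B) h
        simp only [one_mul, mul_assoc] at h2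
        rwa [hone i B, mul_one] at h2
      · rw [h]
        intro hc
        have : (1 : ℂ) ≠ -1 := by norm_num
        exact this hc
    · right
      refine ⟨?_, h⟩
      have h2 := congrArg (· * H i B) h
      simp only [mul_assoc, neg_mul, one_mul] at h2
      rwa [hone i B, mul_one] at h2
  set F : Fin N → Fin N → ℂ := fun i j =>
    if (j = A ∨ j = B) ∧ H i A * (starRingEnd ℂ) (H i B) = -1
      then e * H i j else H i j with hF
  have hFA : ∀ i, F i A = (1 + e)/2 * H i A + (1 - e)/2 * H i B := by
    intro i
    rcases hkey i with ⟨h1, h2⟩ | ⟨h1, h2⟩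
    · simp only [hF]
      rw [if_neg (fun hc => h2 hc.2), h1]; ring
    · simp only [hF]
      rw [if_pos ⟨Or.inl trivial, h2⟩, h1]; ring
  have hFB : ∀ i, F i B = (1 - e)/2 * H i A + (1 + e)/2 * H i B := by
    intro i
    rcases hkey i with ⟨h1, h2⟩ | ⟨h1, h2⟩
    · simp only [hF]
      rw [if_neg (fun hc => h2 hc.2), h1]; ring
    · simp only [hF]
      rw [if_pos ⟨Or.inr trivial, h2⟩, h1]; ring
  have hFo : ∀ i j, j ≠ A → j ≠ B → F i j = H i j := by
    intro i j h1 h2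
    simp only [hF]
    rw [if_neg]
    rintro ⟨h3 | h3, -⟩
    · exact h1 h3
    · exact h2 h3
  constructor
  · intro i j
    show ‖F i j‖ = 1
    simp only [hF]
    split_ifs with h
    · rw [norm_mul, hmod, mul_one, he, Complex.norm_exp]
      simp
    · exact hmod i j
  · intro a b hab
    beta_reduce
    show ∑ i, (starRingEnd ℂ) (F i a) * F i b = 0
    by_cases haA : a = A
    · rw [haA]
      by_cases hbB : b = B
      · rw [hbB]
        -- inner product of the two modified columns
        rw [show (0:ℂ) = ((starRingEnd ℂ) ((1+e)/2) * ((1-e)/2)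
              + (starRingEnd ℂ) ((1-e)/2) * ((1+e)/2)) * (N : ℂ)
              + ((starRingEnd ℂ) ((1+e)/2) * ((1+e)/2)
              + (starRingEnd ℂ) ((1-e)/2) * ((1-e)/2)) * 0 from by
            rw [mul_zero, add_zero]
            have : (starRingEnd ℂ) ((1+e)/2) * ((1-e)/2)
                + (starRingEnd ℂ) ((1-e)/2) * ((1+e)/2) = 0 := by
              have h1 : (starRingEnd ℂ) ((1+e)/2) = (1 + (starRingEnd ℂ) e)/2 := by
                simp [map_div₀, map_add, map_ofNat]
              have h2 : (starRingEnd ℂ) ((1-e)/2) = (1 - (starRingEnd ℂ) e)/2 := by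
                simp [map_div₀, map_sub, map_ofNat]
              rw [h1, h2]
              field_simp
              linear_combination (-2:ℂ) * hee
            rw [this, zero_mul]]
        rw [← horth A B hAB]
        have hN : ∑ i : Fin N, (starRingEnd ℂ) (H i A) * H i A = (N : ℂ) := by
          rw [Finset.sum_congr rfl (fun i _ => hone i A)]
          simp
        have hN' : ∑ i : Fin N, (starRingEnd ℂ) (H i B) * H i B = (N : ℂ) := by
          rw [Finset.sum_congr rfl (fun i _ => hone i B)]
          simp
        have hBA : ∑ i : Fin N, (starRingEnd ℂ) (H i B) * H i A = 0 :=
          horth B A hAB.symm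
        calc ∑ i, (starRingEnd ℂ) (F i A) * F i B
            = ∑ i, ((starRingEnd ℂ) ((1+e)/2) * ((1-e)/2) * ((starRingEnd ℂ) (H i A) * H i A)
              + (starRingEnd ℂ) ((1-e)/2) * ((1+e)/2) * ((starRingEnd ℂ) (H i B) * H i B)
              + (starRingEnd ℂ) ((1+e)/2) * ((1+e)/2) * ((starRingEnd ℂ) (H i A) * H i B)
              + (starRingEnd ℂ) ((1-e)/2) * ((1-e)/2) * ((starRingEnd ℂ) (H i B) * H i A)) := by
              refine Finset.sum_congr rfl fun i _ => ?_
              rw [hFA i, hFB i, map_add, map_mul, map_mul]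
              ring
          _ = (starRingEnd ℂ) ((1+e)/2) * ((1-e)/2) * (N:ℂ)
              + (starRingEnd ℂ) ((1-e)/2) * ((1+e)/2) * (N:ℂ)
              + (starRingEnd ℂ) ((1+e)/2) * ((1+e)/2) * (∑ i, (starRingEnd ℂ) (H i A) * H i B)
              + (starRingEnd ℂ) ((1-e)/2) * ((1-e)/2) * 0 := by
              simp only [Finset.sum_add_distrib, ← Finset.mul_sum, hN, hN', hBA]
          _ = _ := by rw [horth A B hAB]; ring
      · -- a = A, b ∉ {A, B}
        have hbA : b ≠ A := by rw [← haA]; exact fun h => hab h.symm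
        calc ∑ i, (starRingEnd ℂ) (F i A) * F i b
            = ∑ i, ((starRingEnd ℂ) ((1+e)/2) * ((starRingEnd ℂ) (H i A) * H i b)
              + (starRingEnd ℂ) ((1-e)/2) * ((starRingEnd ℂ) (H i B) * H i b)) := by
              refine Finset.sum_congr rfl fun i _ => ?_
              rw [hFA i, hFo i b hbA hbB, map_add, map_mul, map_mul]
              ring
          _ = (starRingEnd ℂ) ((1+e)/2) * (∑ i, (starRingEnd ℂ) (H i A) * H i b)
              + (starRingEnd ℂ) ((1-e)/2) * (∑ i, (starRingEnd ℂ) (H i B) * H i b) := by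
              simp only [Finset.sum_add_distrib, ← Finset.mul_sum]
          _ = 0 := by
              rw [horth A b (Ne.symm hbA), horth B b (Ne.symm hbB)]; ring
    · by_cases haB : a = B
      · rw [haB]
        by_cases hbA : b = A
        · rw [hbA]
          rw [show (0:ℂ) = ((starRingEnd ℂ) ((1-e)/2) * ((1+e)/2)
                + (starRingEnd ℂ) ((1+e)/2) * ((1-e)/2)) * (N : ℂ)
                + ((starRingEnd ℂ) ((1-e)/2) * ((1-e)/2)
                + (starRingEnd ℂ) ((1+e)/2) * ((1+e)/2)) * 0 from by
              rw [mul_zero, add_zero]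
              have : (starRingEnd ℂ) ((1-e)/2) * ((1+e)/2)
                  + (starRingEnd ℂ) ((1+e)/2) * ((1-e)/2) = 0 := by
                have h1 : (starRingEnd ℂ) ((1+e)/2) = (1 + (starRingEnd ℂ) e)/2 := by
                  simp [map_div₀, map_add, map_ofNat]
                have h2 : (starRingEnd ℂ) ((1-e)/2) = (1 - (starRingEnd ℂ) e)/2 := by
                  simp [map_div₀, map_sub, map_ofNat]
                rw [h1, h2]
                field_simp
                linear_combination (-2:ℂ) * hee
              rw [this, zero_mul]]
          have hN : ∑ i : Fin N, (starRingEnd ℂ) (H i A) * H i A = (N : ℂ) := by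
            rw [Finset.sum_congr rfl (fun i _ => hone i A)]
            simp
          have hN' : ∑ i : Fin N, (starRingEnd ℂ) (H i B) * H i B = (N : ℂ) := by
            rw [Finset.sum_congr rfl (fun i _ => hone i B)]
            simp
          have hAB' : ∑ i : Fin N, (starRingEnd ℂ) (H i A) * H i B = 0 :=
            horth A B hAB
          calc ∑ i, (starRingEnd ℂ) (F i B) * F i A
              = ∑ i, ((starRingEnd ℂ) ((1-e)/2) * ((1+e)/2) * ((starRingEnd ℂ) (H i A) * H i A)
                + (starRingEnd ℂ) ((1+e)/2) * ((1-e)/2) * ((starRingEnd ℂ) (H i B) * H i B)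
                + (starRingEnd ℂ) ((1-e)/2) * ((1-e)/2) * ((starRingEnd ℂ) (H i A) * H i B)
                + (starRingEnd ℂ) ((1+e)/2) * ((1+e)/2) * ((starRingEnd ℂ) (H i B) * H i A)) := by
                refine Finset.sum_congr rfl fun i _ => ?_
                rw [hFB i, hFA i, map_add, map_mul, map_mul]
                ring
            _ = (starRingEnd ℂ) ((1-e)/2) * ((1+e)/2) * (N:ℂ)
                + (starRingEnd ℂ) ((1+e)/2) * ((1-e)/2) * (N:ℂ)
                + (starRingEnd ℂ) ((1-e)/2) * ((1-e)/2) * 0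
                + (starRingEnd ℂ) ((1+e)/2) * ((1+e)/2) * (∑ i, (starRingEnd ℂ) (H i B) * H i A) := by
                simp only [Finset.sum_add_distrib, ← Finset.mul_sum, hN, hN', hAB']
            _ = _ := by rw [horth B A hAB.symm]; ring
        · -- a = B, b ∉ {A, B}
          have hbB : b ≠ B := by rw [← haB]; exact fun h => hab h.symm
          calc ∑ i, (starRingEnd ℂ) (F i B) * F i b
              = ∑ i, ((starRingEnd ℂ) ((1-e)/2) * ((starRingEnd ℂ) (H i A) * H i b)
                + (starRingEnd ℂ) ((1+e)/2) * ((starRingEnd ℂ) (H i B) * H i b)) := by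
                refine Finset.sum_congr rfl fun i _ => ?_
                rw [hFB i, hFo i b hbA hbB, map_add, map_mul, map_mul]
                ring
            _ = (starRingEnd ℂ) ((1-e)/2) * (∑ i, (starRingEnd ℂ) (H i A) * H i b)
                + (starRingEnd ℂ) ((1+e)/2) * (∑ i, (starRingEnd ℂ) (H i B) * H i b) := by
                simp only [Finset.sum_add_distrib, ← Finset.mul_sum]
            _ = 0 := by
                rw [horth A b (Ne.symm hbA), horth B b (Ne.symm hbB)]; ring
      · -- a ∉ {A, B}
        by_cases hbA : b = A
        · rw [hbA]
          calc ∑ i, (starRingEnd ℂ) (F i a) * F i A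
              = ∑ i, ((1+e)/2 * ((starRingEnd ℂ) (H i a) * H i A)
                + (1-e)/2 * ((starRingEnd ℂ) (H i a) * H i B)) := by
                refine Finset.sum_congr rfl fun i _ => ?_
                rw [hFA i, hFo i a haA haB]
                ring
            _ = (1+e)/2 * (∑ i, (starRingEnd ℂ) (H i a) * H i A)
                + (1-e)/2 * (∑ i, (starRingEnd ℂ) (H i a) * H i B) := by
                simp only [Finset.sum_add_distrib, ← Finset.mul_sum]
            _ = 0 := by
                rw [horth a A haA, horth a B haB]; ring
        · by_cases hbB : b = B
          · rw [hbB]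
            calc ∑ i, (starRingEnd ℂ) (F i a) * F i B
                = ∑ i, ((1-e)/2 * ((starRingEnd ℂ) (H i a) * H i A)
                  + (1+e)/2 * ((starRingEnd ℂ) (H i a) * H i B)) := by
                  refine Finset.sum_congr rfl fun i _ => ?_
                  rw [hFB i, hFo i a haA haB]
                  ring
              _ = (1-e)/2 * (∑ i, (starRingEnd ℂ) (H i a) * H i A)
                  + (1+e)/2 * (∑ i, (starRingEnd ℂ) (H i a) * H i B) := by
                  simp only [Finset.sum_add_distrib, ← Finset.mul_sum]
              _ = 0 := by
                  rw [horth a A haA, horth a B haB]; ring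
          · rw [Finset.sum_congr rfl fun i _ => by
              rw [hFo i a haA haB, hFo i b hbA hbB]]
            exact horth a b hab
end
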